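/- Let K be a compact Hausdorff space which has a non-trivial convergent sequence, that is, a sequence (x_k) of pairwise distinct points of K converging to some point of K. Then the set NM(C(K)) of bounded linear operators on C(K) that are not weak multipliers is spaceable in L(C(K)). -/

import Mathlib

open Filter Topology

/-- A bounded linear operator `T` on `C(K, ℝ)` is a *weak multiplier* if for every bounded
pairwise disjoint sequence `(e_n)` in `C(K, ℝ)` and every sequence `(x_n)` in `K` with
`e_n (x_n) = 0` for all `n`, one has `T (e_n) (x_n) → 0`. -/
def IsWeakMultiplier {K : Type*} [TopologicalSpace K] [CompactSpace K]
    (T : C(K, ℝ) →L[ℝ] C(K, ℝ)) : Prop :=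
  ∀ (e : ℕ → C(K, ℝ)) (x : ℕ → K),
    (∃ M : ℝ, ∀ n, ‖e n‖ ≤ M) →
    (∀ i j, i ≠ j → e i * e j = 0) →
    (∀ n, (e n) (x n) = 0) →
    Filter.Tendsto (fun n => (T (e n)) (x n)) Filter.atTop (nhds 0)

/-- An operator on `C(K, ℝ)` is *weakly compact* if the image of the closed unit ball has
compact closure in the weak topology. -/
def IsWeaklyCompactOp {K : Type*} [TopologicalSpace K] [CompactSpace K]
    (S : C(K, ℝ) →L[ℝ] C(K, ℝ)) : Prop :=
  IsCompact (closure ((toWeakSpace ℝ C(K, ℝ)) '' (S '' Metric.closedBall 0 1)))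

/-- An operator on `C(K, ℝ)` is a *weak multiplication* if it has the form `g•I + S` with
`g ∈ C(K, ℝ)` and `S` weakly compact. -/
def IsWeakMultiplication {K : Type*} [TopologicalSpace K] [CompactSpace K]
    (T : C(K, ℝ) →L[ℝ] C(K, ℝ)) : Prop :=
  ∃ (g : C(K, ℝ)) (S : C(K, ℝ) →L[ℝ] C(K, ℝ)),
    IsWeaklyCompactOp S ∧ T = ContinuousLinearMap.mul ℝ C(K, ℝ) g + S

/-- A subset `A` of a real vector space is *lineable* if `A ∪ {0}` contains an
infinite-dimensional subspace. -/
def Lineable {X : Type*} [AddCommGroup X] [Module ℝ X] (A : Set X) : Prop :=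
  ∃ W : Submodule ℝ X, ¬ FiniteDimensional ℝ W ∧ (W : Set X) ⊆ A ∪ {0}

/-- A subset `A` of a real normed space is *spaceable* if `A ∪ {0}` contains a closed
infinite-dimensional subspace. -/
def Spaceable {X : Type*} [NormedAddCommGroup X] [NormedSpace ℝ X] (A : Set X) : Prop :=
  ∃ W : Submodule ℝ X, IsClosed (W : Set X) ∧ ¬ FiniteDimensional ℝ W ∧ (W : Set X) ⊆ A ∪ {0}


lemma exists_disjoint_opens {K : Type*} [TopologicalSpace K] [T2Space K]
    (y : ℕ → K) (p : K) (hy : Function.Injective y) (hp : ∀ n, y n ≠ p)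
    (hconv : Filter.Tendsto y Filter.atTop (nhds p)) :
    ∃ U : ℕ → Set K, (∀ n, IsOpen (U n)) ∧ (∀ n, y n ∈ U n) ∧
      ∀ n m, n ≠ m → Disjoint (U n) (U m) := by
  classical
  set C : ℕ → Set K := fun n => insert p (Set.range fun m => y (m + n)) with hCdef
  have hCcompact : ∀ n, IsCompact (C n) := fun n =>
    (hconv.comp (tendsto_add_atTop_nat n)).isCompact_insert_range
  have hyC : ∀ n, y n ∉ C (n + 1) := by
    intro n h
    rcases h with h | ⟨m, hm⟩
    · exact hp n h
    · have := hy hm.symm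
      omega
  have hyCmem : ∀ n, y n ∈ C n := fun n => Set.mem_insert_iff.2 (Or.inr ⟨0, by simp⟩)
  have step : ∀ (n : ℕ) (O : Set K), IsOpen O → C n ⊆ O →
      ∃ q : Set K × Set K, IsOpen q.1 ∧ IsOpen q.2 ∧ y n ∈ q.1 ∧ C (n + 1) ⊆ q.2 ∧
        Disjoint q.1 q.2 ∧ q.1 ⊆ O ∧ q.2 ⊆ O := by
    intro n O hO hCO
    obtain ⟨A, B, hA, hB, hyA, hCB, hAB⟩ :=
      SeparatedNhds.of_isCompact_isCompact isCompact_singleton (hCcompact (n + 1))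
        (Set.disjoint_singleton_left.mpr (hyC n))
    refine ⟨(A ∩ O, B ∩ O), hA.inter hO, hB.inter hO,
      ⟨hyA rfl, hCO (hyCmem n)⟩, ?_, ?_, Set.inter_subset_right, Set.inter_subset_right⟩
    · intro z hz
      exact ⟨hCB hz, hCO (by
        rcases hz with h | ⟨m, hm⟩
        · exact Set.mem_insert_iff.2 (Or.inl h)
        · exact Set.mem_insert_iff.2 (Or.inr ⟨m + 1, by rw [← hm]; ring_nf⟩))⟩
    · exact (hAB.mono Set.inter_subset_left Set.inter_subset_left)
  choose! q hq1 hq2 hq3 hq4 hq5 hq6 hq7 using step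
  let F : ℕ → Set K × Set K := fun n => Nat.rec (q 0 Set.univ) (fun m prev => q (m + 1) prev.2) n
  let O : ℕ → Set K := fun n => Nat.rec Set.univ (fun m _ => (F m).2) n
  have hFO : ∀ n, F n = q n (O n) := by intro n; cases n <;> rfl
  have hInv : ∀ n, IsOpen (O n) ∧ C n ⊆ O n := by
    intro n
    induction n with
    | zero => exact ⟨isOpen_univ, Set.subset_univ _⟩
    | succ m ih =>
      have h2 := hq2 m (O m) ih.1 ih.2
      have h4 := hq4 m (O m) ih.1 ih.2
      rw [← hFO m] at h2 h4
      exact ⟨h2, h4⟩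
  have hUopen : ∀ n, IsOpen (F n).1 := by
    intro n; rw [hFO n]; exact hq1 n (O n) (hInv n).1 (hInv n).2
  have hyU : ∀ n, y n ∈ (F n).1 := by
    intro n; rw [hFO n]; exact hq3 n (O n) (hInv n).1 (hInv n).2
  have hdisjUV : ∀ n, Disjoint (F n).1 (F n).2 := by
    intro n; rw [hFO n]; exact hq5 n (O n) (hInv n).1 (hInv n).2
  have hUsub : ∀ n, (F (n + 1)).1 ⊆ (F n).2 := by
    intro n
    have := hq6 (n + 1) (O (n + 1)) (hInv (n + 1)).1 (hInv (n + 1)).2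
    rw [← hFO (n + 1)] at this
    exact this
  have hVsub : ∀ n, (F (n + 1)).2 ⊆ (F n).2 := by
    intro n
    have := hq7 (n + 1) (O (n + 1)) (hInv (n + 1)).1 (hInv (n + 1)).2
    rw [← hFO (n + 1)] at this
    exact this
  have hVchain : ∀ n m, n ≤ m → (F m).2 ⊆ (F n).2 := by
    intro n m hnm
    induction m with
    | zero => simp_all
    | succ k ih =>
      rcases Nat.lt_or_ge n (k + 1) with h | h
      · exact (hVsub k).trans (ih (by omega))
      · have : n = k + 1 := by omega
        subst this; rfl
  have key : ∀ n m, n < m → Disjoint (F n).1 (F m).1 := by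
    intro n m hnm
    obtain ⟨k, rfl⟩ : ∃ k, m = k + 1 := ⟨m - 1, by omega⟩
    have : (F (k + 1)).1 ⊆ (F n).2 := (hUsub k).trans (hVchain n k (by omega))
    exact (hdisjUV n).mono_right this
  refine ⟨fun n => (F n).1, hUopen, hyU, fun n m hnm => ?_⟩
  rcases Nat.lt_or_ge n m with h | h
  · exact key n m h
  · exact (key m n (by omega)).symm


lemma exists_bumps {K : Type*} [TopologicalSpace K] [CompactSpace K] [T2Space K]
    (y : ℕ → K) (U : ℕ → Set K) (hUopen : ∀ n, IsOpen (U n)) (hyU : ∀ n, y n ∈ U n) :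
    ∃ g : ℕ → C(K, ℝ), (∀ n, g n (y n) = 1) ∧ (∀ n z, g n z ∈ Set.Icc (0:ℝ) 1) ∧
      (∀ n z, z ∉ U n → g n z = 0) := by
  have h : ∀ n : ℕ, ∃ f : C(K, ℝ), Set.EqOn f 0 (U n)ᶜ ∧ Set.EqOn f 1 {y n} ∧
      ∀ z, f z ∈ Set.Icc (0:ℝ) 1 := by
    intro n
    apply exists_continuous_zero_one_of_isClosed (hUopen n).isClosed_compl isClosed_singleton
    rw [Set.disjoint_left]
    intro a ha hmem
    rw [Set.mem_singleton_iff] at hmem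
    exact ha (hmem ▸ hyU n)
  choose g hg0 hg1 hg01 using h
  exact ⟨g, fun n => hg1 n rfl, hg01, fun n z hz => hg0 n hz⟩


noncomputable def deltaBCF (i : ℕ) : BoundedContinuousFunction ℕ ℝ :=
  ⟨⟨fun k => if k = i then 1 else 0, continuous_of_discreteTopology⟩, 2, by
    intro a b
    simp only [ContinuousMap.coe_mk]
    rw [Real.dist_eq]
    have h1 : |(if a = i then (1:ℝ) else 0)| ≤ 1 := by split_ifs <;> norm_num
    have h2 : |(if b = i then (1:ℝ) else 0)| ≤ 1 := by split_ifs <;> norm_num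
    calc |(if a = i then (1:ℝ) else 0) - (if b = i then 1 else 0)| ≤ _ + _ := abs_sub _ _
      _ ≤ 2 := by linarith⟩

lemma deltaBCF_apply (i k : ℕ) : deltaBCF i k = if k = i then 1 else 0 := rfl

lemma deltaBCF_linearIndependent : LinearIndependent ℝ deltaBCF := by
  rw [linearIndependent_iff']
  intro s a h i hi
  have := congrArg (fun F : BoundedContinuousFunction ℕ ℝ => F i) h
  have hsum : (∑ j ∈ s, a j • deltaBCF j) i = ∑ j ∈ s, a j * (deltaBCF j) i := by
    rw [← BoundedContinuousFunction.evalCLM_apply (𝕜 := ℝ) i, map_sum]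
    simp [BoundedContinuousFunction.evalCLM_apply]
  rw [hsum] at this
  have : ∑ j ∈ s, a j * (deltaBCF j) i = a i := by
    rw [Finset.sum_eq_single_of_mem i hi]
    · simp [deltaBCF_apply]
    · intro j hj hji
      have : (deltaBCF j) i = 0 := by simp [deltaBCF_apply, Ne.symm hji]
      rw [this, mul_zero]
  simp_all

lemma not_finiteDimensional_BCF : ¬ FiniteDimensional ℝ (BoundedContinuousFunction ℕ ℝ) := by
  intro h
  exact Module.Finite.not_linearIndependent_of_infinite deltaBCF deltaBCF_linearIndependent

section GMachinery

variable {K : Type*} [TopologicalSpace K] [CompactSpace K]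

lemma myEvalCLM_apply (z : K) (f : C(K, ℝ)) : ContinuousMap.evalCLM ℝ z f = f z := rfl

lemma sum_G_le_one (G : ℕ → C(K, ℝ)) (hG01 : ∀ n z, G n z ∈ Set.Icc (0:ℝ) 1)
    (hGdisj : ∀ n m, n ≠ m → ∀ z, G n z = 0 ∨ G m z = 0)
    (t : Finset ℕ) (z : K) : ∑ n ∈ t, G n z ≤ 1 := by
  classical
  by_cases h : ∀ n ∈ t, G n z = 0
  · rw [Finset.sum_eq_zero h]; norm_num
  · push_neg at h
    obtain ⟨n₀, hn₀, hne⟩ := h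
    rw [Finset.sum_eq_single_of_mem n₀ hn₀ (fun m hm hmn =>
      (hGdisj m n₀ hmn z).resolve_right hne)]
    exact (hG01 n₀ z).2

lemma norm_finset_sum_le (G : ℕ → C(K, ℝ)) (hG01 : ∀ n z, G n z ∈ Set.Icc (0:ℝ) 1)
    (hGdisj : ∀ n m, n ≠ m → ∀ z, G n z = 0 ∨ G m z = 0)
    (c : ℕ → ℝ) (M : ℝ) (hM : 0 ≤ M) (t : Finset ℕ) (hc : ∀ n ∈ t, |c n| ≤ M) :
    ‖∑ n ∈ t, c n • G n‖ ≤ M := by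
  rw [ContinuousMap.norm_le _ hM]
  intro z
  have happly : (∑ n ∈ t, c n • G n) z = ∑ n ∈ t, c n * G n z := by
    rw [← myEvalCLM_apply z, map_sum]
    simp [myEvalCLM_apply]
  rw [Real.norm_eq_abs, happly]
  calc |∑ n ∈ t, c n * G n z| ≤ ∑ n ∈ t, |c n * G n z| := Finset.abs_sum_le_sum_abs _ _
    _ ≤ ∑ n ∈ t, M * G n z := by
        apply Finset.sum_le_sum
        intro n hn
        rw [abs_mul, abs_of_nonneg (hG01 n z).1]
        exact mul_le_mul_of_nonneg_right (hc n hn) (hG01 n z).1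
    _ = M * ∑ n ∈ t, G n z := by rw [Finset.mul_sum]
    _ ≤ M * 1 := mul_le_mul_of_nonneg_left (sum_G_le_one G hG01 hGdisj t z) hM
    _ = M := mul_one M

lemma summable_G (G : ℕ → C(K, ℝ)) (hG01 : ∀ n z, G n z ∈ Set.Icc (0:ℝ) 1)
    (hGdisj : ∀ n m, n ≠ m → ∀ z, G n z = 0 ∨ G m z = 0)
    (c : ℕ → ℝ) (hc : Filter.Tendsto c Filter.atTop (nhds 0)) :
    Summable (fun n => c n • G n) := by
  rw [summable_iff_vanishing_norm]
  intro ε hε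
  obtain ⟨N, hN⟩ := Metric.tendsto_atTop.mp hc (ε / 2) (by positivity)
  refine ⟨Finset.range N, fun t ht => ?_⟩
  have hb : ∀ n ∈ t, |c n| ≤ ε / 2 := by
    intro n hn
    have hnN : N ≤ n := by
      by_contra hlt
      exact (Finset.disjoint_left.mp ht hn) (Finset.mem_range.mpr (by omega))
    have := hN n hnN
    rw [Real.dist_eq, sub_zero] at this
    linarith
  calc ‖∑ n ∈ t, c n • G n‖ ≤ ε / 2 :=
        norm_finset_sum_le G hG01 hGdisj c (ε / 2) (by positivity) t hb
    _ < ε := by linarith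

lemma norm_tsum_G_le (G : ℕ → C(K, ℝ)) (hG01 : ∀ n z, G n z ∈ Set.Icc (0:ℝ) 1)
    (hGdisj : ∀ n m, n ≠ m → ∀ z, G n z = 0 ∨ G m z = 0)
    (c : ℕ → ℝ) (M : ℝ) (hM : 0 ≤ M) (hc : ∀ n, |c n| ≤ M) :
    ‖∑' n, c n • G n‖ ≤ M := by
  by_cases hs : Summable (fun n => c n • G n)
  · have ht : Filter.Tendsto (fun s : Finset ℕ => ∑ n ∈ s, c n • G n) Filter.atTop
        (nhds (∑' n, c n • G n)) := hs.hasSum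
    refine le_of_tendsto (Filter.Tendsto.norm ht) ?_
    filter_upwards with s
    exact norm_finset_sum_le G hG01 hGdisj c M hM s (fun n _ => hc n)
  · rw [tsum_eq_zero_of_not_summable hs, norm_zero]; exact hM

lemma tsum_G_apply (G : ℕ → C(K, ℝ)) (c : ℕ → ℝ) (hs : Summable (fun n => c n • G n))
    (z : K) : (∑' n, c n • G n) z = ∑' n, c n * G n z := by
  rw [← myEvalCLM_apply z, ContinuousLinearMap.map_tsum _ hs]
  simp [myEvalCLM_apply]

end GMachinery


lemma aux_main {K : Type*} [TopologicalSpace K] [CompactSpace K] [T2Space K]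
    (y : ℕ → K) (hy : Function.Injective y) (p : K) (hp : ∀ n, y n ≠ p)
    (hconv : Filter.Tendsto y Filter.atTop (nhds p)) :
    Spaceable {T : C(K, ℝ) →L[ℝ] C(K, ℝ) | ¬ IsWeakMultiplier T} := by
  classical
  obtain ⟨U, hUopen, hyU, hUdisj⟩ := exists_disjoint_opens y p hy hp hconv
  obtain ⟨g, hg1, hg01, hg0⟩ := exists_bumps y U hUopen hyU
  have hgnorm : ∀ n, ‖g n‖ ≤ 1 := by
    intro n
    rw [ContinuousMap.norm_le _ zero_le_one]
    intro z
    rw [Real.norm_eq_abs, abs_le]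
    exact ⟨by linarith [(hg01 n z).1], (hg01 n z).2⟩
  have hgy : ∀ n m, n ≠ m → g n (y m) = 0 := by
    intro n m hnm
    exact hg0 n (y m) (Set.disjoint_left.mp (hUdisj m n (Ne.symm hnm)) (hyU m))
  have hgz : ∀ n m, n ≠ m → ∀ z, g n z = 0 ∨ g m z = 0 := by
    intro n m hnm z
    by_cases h : z ∈ U n
    · exact Or.inr (hg0 m z (Set.disjoint_left.mp (hUdisj n m hnm) h))
    · exact Or.inl (hg0 n z h)
  set G : ℕ → C(K, ℝ) := fun n => g (2 * n) with hGdef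
  have hG01 : ∀ n z, G n z ∈ Set.Icc (0:ℝ) 1 := fun n z => hg01 _ z
  have hGdisj : ∀ n m, n ≠ m → ∀ z, G n z = 0 ∨ G m z = 0 :=
    fun n m hnm z => hgz _ _ (by omega) z
  set f : ℕ → ℕ := fun k => (Nat.unpair k).1 with hfdef
  set c : (BoundedContinuousFunction ℕ ℝ) → C(K, ℝ) → ℕ → ℝ :=
    fun b e n => b (f n) * (e (y (2 * n)) - e (y (2 * n + 1))) with hcdef
  have hcbound : ∀ b e n, |c b e n| ≤ ‖b‖ * (2 * ‖e‖) := by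
    intro b e n
    rw [hcdef, abs_mul]
    refine mul_le_mul (b.norm_coe_le_norm _) ?_ (abs_nonneg _) (norm_nonneg _)
    calc |e (y (2*n)) - e (y (2*n+1))| ≤ |e (y (2*n))| + |e (y (2*n+1))| := abs_sub _ _
      _ ≤ ‖e‖ + ‖e‖ := add_le_add (e.norm_coe_le_norm _) (e.norm_coe_le_norm _)
      _ = 2 * ‖e‖ := by ring
  have htendsto : ∀ b e, Filter.Tendsto (c b e) Filter.atTop (nhds 0) := by
    intro b e
    have h2n : Filter.Tendsto (fun n : ℕ => 2 * n) Filter.atTop Filter.atTop :=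
      tendsto_atTop_mono (fun n => by simp only [id_eq]; omega) tendsto_id
    have h2n1 : Filter.Tendsto (fun n : ℕ => 2 * n + 1) Filter.atTop Filter.atTop :=
      tendsto_atTop_mono (fun n => by simp only [id_eq]; omega) tendsto_id
    have he1 : Filter.Tendsto (fun n => e (y (2 * n))) Filter.atTop (nhds (e p)) :=
      ((e.continuous.tendsto p).comp hconv).comp h2n
    have he2 : Filter.Tendsto (fun n => e (y (2 * n + 1))) Filter.atTop (nhds (e p)) :=
      ((e.continuous.tendsto p).comp hconv).comp h2n1
    have hsub : Filter.Tendsto (fun n => e (y (2*n)) - e (y (2*n+1))) Filter.atTop (nhds 0) := by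
      have := he1.sub he2; rwa [sub_self] at this
    apply squeeze_zero_norm (a := fun n => ‖b‖ * |e (y (2*n)) - e (y (2*n+1))|)
    · intro n
      rw [hcdef, Real.norm_eq_abs, abs_mul]
      exact mul_le_mul_of_nonneg_right (b.norm_coe_le_norm _) (abs_nonneg _)
    · have := hsub.abs.const_mul ‖b‖
      simpa using this
  have hsum : ∀ b e, Summable (fun n => c b e n • G n) := fun b e =>
    summable_G G hG01 hGdisj _ (htendsto b e)
  have hcadd : ∀ (b : BoundedContinuousFunction ℕ ℝ) (e e' : C(K,ℝ)) n,
      c b (e + e') n = c b e n + c b e' n := by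
    intro b e e' n
    simp only [hcdef, ContinuousMap.add_apply]
    ring
  have hcsmul : ∀ (b : BoundedContinuousFunction ℕ ℝ) (r : ℝ) (e : C(K,ℝ)) n,
      c b (r • e) n = r * c b e n := by
    intro b r e n
    simp only [hcdef, ContinuousMap.smul_apply, smul_eq_mul]
    ring
  set Tlin : (BoundedContinuousFunction ℕ ℝ) → C(K, ℝ) →ₗ[ℝ] C(K, ℝ) := fun b =>
    { toFun := fun e => ∑' n, c b e n • G n
      map_add' := by
        intro e e'
        calc ∑' n, c b (e + e') n • G n
            = ∑' n, (c b e n • G n + c b e' n • G n) := by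
              refine tsum_congr fun n => ?_
              rw [hcadd, add_smul]
          _ = _ := Summable.tsum_add (hsum b e) (hsum b e')
      map_smul' := by
        intro r e
        calc ∑' n, c b (r • e) n • G n
            = ∑' n, r • (c b e n • G n) := by
              refine tsum_congr fun n => ?_
              rw [hcsmul, mul_smul]
          _ = r • ∑' n, c b e n • G n := Summable.tsum_const_smul r (hsum b e) } with hTlindef
  have hTlinbound : ∀ b e, ‖Tlin b e‖ ≤ 2 * ‖b‖ * ‖e‖ := by
    intro b e
    calc ‖Tlin b e‖ = ‖∑' n, c b e n • G n‖ := rfl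
      _ ≤ ‖b‖ * (2 * ‖e‖) :=
          norm_tsum_G_le G hG01 hGdisj _ _ (by positivity) (hcbound b e)
      _ = 2 * ‖b‖ * ‖e‖ := by ring
  set T : (BoundedContinuousFunction ℕ ℝ) → C(K, ℝ) →L[ℝ] C(K, ℝ) := fun b =>
    LinearMap.mkContinuous (Tlin b) (2 * ‖b‖) (hTlinbound b) with hTdef
  have hTapply : ∀ b e z, T b e z = ∑' n, c b e n * G n z :=
    fun b e z => tsum_G_apply G (c b e) (hsum b e) z
  set Φ : (BoundedContinuousFunction ℕ ℝ) →ₗ[ℝ] (C(K, ℝ) →L[ℝ] C(K, ℝ)) :=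
    { toFun := T
      map_add' := by
        intro b b'
        apply ContinuousLinearMap.ext
        intro e
        show ∑' n, c (b + b') e n • G n = (∑' n, c b e n • G n) + ∑' n, c b' e n • G n
        calc ∑' n, c (b + b') e n • G n
            = ∑' n, (c b e n • G n + c b' e n • G n) := by
              refine tsum_congr fun n => ?_
              have : c (b + b') e n = c b e n + c b' e n := by
                simp only [hcdef, BoundedContinuousFunction.coe_add, Pi.add_apply]
                ring
              rw [this, add_smul]
          _ = _ := Summable.tsum_add (hsum b e) (hsum b' e)
      map_smul' := by
        intro r b
        apply ContinuousLinearMap.ext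
        intro e
        show ∑' n, c (r • b) e n • G n = r • ∑' n, c b e n • G n
        calc ∑' n, c (r • b) e n • G n
            = ∑' n, r • (c b e n • G n) := by
              refine tsum_congr fun n => ?_
              have : c (r • b) e n = r * c b e n := by
                simp only [hcdef, BoundedContinuousFunction.coe_smul, Pi.smul_apply,
                  smul_eq_mul]
                ring
              rw [this, mul_smul]
          _ = _ := Summable.tsum_const_smul r (hsum b e) } with hΦdef
  have hupper : ∀ b, ‖T b‖ ≤ 2 * ‖b‖ :=
    fun b => LinearMap.mkContinuous_norm_le (Tlin b) (by positivity) (hTlinbound b)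
  have comp1 : ∀ b k, T b (G k) (y (2 * k)) = b (f k) := by
    intro b k
    rw [hTapply, tsum_eq_single k]
    · have h1 : G k (y (2*k)) = 1 := hg1 (2*k)
      have h2 : G k (y (2*k+1)) = 0 := hgy (2*k) (2*k+1) (by omega)
      rw [hcdef]
      simp only [h1, h2]
      ring
    · intro n hnk
      have : G n (y (2*k)) = 0 := hgy (2*n) (2*k) (by omega)
      rw [this, mul_zero]
  have comp2 : ∀ b k, T b (g (2*k+1)) (y (2 * k)) = -(b (f k)) := by
    intro b k
    rw [hTapply, tsum_eq_single k]
    · have h1 : g (2*k+1) (y (2*k)) = 0 := hgy _ _ (by omega)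
      have h2 : g (2*k+1) (y (2*k+1)) = 1 := hg1 _
      have h3 : G k (y (2*k)) = 1 := hg1 _
      rw [hcdef]
      simp only [h1, h2, h3]
      ring
    · intro n hnk
      have : G n (y (2*k)) = 0 := hgy (2*n) (2*k) (by omega)
      rw [this, mul_zero]
  have hlower : ∀ b, ‖b‖ ≤ ‖T b‖ := by
    intro b
    rw [BoundedContinuousFunction.norm_le (norm_nonneg (T b))]
    intro i
    set k := Nat.pair i 0 with hk
    have hbk : b i = T b (G k) (y (2*k)) := by
      rw [comp1]
      simp [hfdef, hk, Nat.unpair_pair]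
    calc ‖b i‖ = ‖T b (G k) (y (2*k))‖ := by rw [← hbk]
      _ ≤ ‖T b (G k)‖ := ContinuousMap.norm_coe_le_norm _ _
      _ ≤ ‖T b‖ * ‖G k‖ := (T b).le_opNorm _
      _ ≤ ‖T b‖ * 1 := mul_le_mul_of_nonneg_left (hgnorm _) (norm_nonneg (T b))
      _ = ‖T b‖ := mul_one _
  have hlip : LipschitzWith (Real.toNNReal 2) (⇑Φ) :=
    AddMonoidHomClass.lipschitz_of_bound Φ 2 (fun b => hupper b)
  have antilip : AntilipschitzWith 1 (⇑Φ) :=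
    AddMonoidHomClass.antilipschitz_of_bound Φ
      (fun b => by rw [NNReal.coe_one, one_mul]; exact hlower b)
  have hinjΦ : Function.Injective Φ := fun a b h => antilip.injective h
  have hnfd : ¬ FiniteDimensional ℝ (LinearMap.range Φ) := by
    intro hfd
    have e := LinearEquiv.ofInjective Φ hinjΦ
    exact not_finiteDimensional_BCF (Module.Finite.equiv e.symm)
  refine ⟨LinearMap.range Φ, ?_, hnfd, ?_⟩
  · have h := antilip.isClosed_range hlip.uniformContinuous
    rw [LinearMap.coe_range]
    exact h
  · rintro Tb ⟨b, rfl⟩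
    by_cases hb : b = 0
    · right; simp [hb]
    · left
      intro hwm
      have h1 : Filter.Tendsto (fun k => Φ b (g (2*k+1)) (y (2*k))) Filter.atTop (nhds 0) := by
        apply hwm (fun k => g (2*k+1)) (fun k => y (2*k)) ⟨1, fun k => hgnorm _⟩
        · intro i j hij
          ext z
          rcases hgz (2*i+1) (2*j+1) (by omega) z with h | h <;>
            simp [ContinuousMap.mul_apply, h]
        · intro k; exact hgy (2*k+1) (2*k) (by omega)
      have h2 : Filter.Tendsto (fun k => b (f k)) Filter.atTop (nhds 0) := by
        have heq : (fun k => Φ b (g (2*k+1)) (y (2*k))) = fun k => -(b (f k)) :=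
          funext fun k => comp2 b k
        rw [heq] at h1
        simpa using h1.neg
      apply hb
      ext i
      have hpair : Filter.Tendsto (fun j => Nat.pair i j) Filter.atTop Filter.atTop :=
        tendsto_atTop_mono (fun j => by simpa using Nat.right_le_pair i j) tendsto_id
      have h3 : Filter.Tendsto (fun j => b (f (Nat.pair i j))) Filter.atTop (nhds 0) :=
        h2.comp hpair
      have h4 : (fun j => b (f (Nat.pair i j))) = fun _ => b i := by
        funext j; simp [hfdef, Nat.unpair_pair]
      rw [h4] at h3
      have := tendsto_nhds_unique h3 tendsto_const_nhds
      simpa using this.symm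

/-- If `K` has a non-trivial convergent sequence, then the set of operators on `C(K, ℝ)`
that are not weak multipliers is spaceable. -/
theorem spaceable_nonWeakMultipliers_of_convergent_sequence
    {K : Type*} [TopologicalSpace K] [CompactSpace K] [T2Space K]
    (x : ℕ → K) (hinj : Function.Injective x)
    (p : K) (hconv : Filter.Tendsto x Filter.atTop (nhds p)) :
    Spaceable {T : C(K, ℝ) →L[ℝ] C(K, ℝ) | ¬ IsWeakMultiplier T} := by
  classical
  obtain ⟨s, hs⟩ : ∃ s : ℕ, ∀ n, x (n + s) ≠ p := by
    by_cases h : ∃ m, x m = p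
    · obtain ⟨m, hm⟩ := h
      refine ⟨m + 1, fun n hn => ?_⟩
      have := hinj (hn.trans hm.symm)
      omega
    · exact ⟨0, fun n hn => h ⟨n + 0, hn⟩⟩
  exact aux_main (fun n => x (n + s)) (fun a b h => by have := hinj h; omega) p hs
    (hconv.comp (tendsto_add_atTop_nat s))
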